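/- Let f(z) = Σ_{i=0}^N c_i z^i be a polynomial over ℂ, let k_1, …, k_d be positive integers with k = Σ k_i, and let a_1, …, a_d be complex numbers. In the ring of formal Laurent series in z^{−1}, the expansion of f(z)/∏_{i=1}^d (z^{k_i} − a_i) has polynomial part f_0(z) = Σ_{j=0}^{N−k} d_j z^j, where d_j = Σ_{i=k+j}^{N} c_i · ( Σ_{ℓ_1 k_1 + ⋯ + ℓ_d k_d = i−k−j} a_1^{ℓ_1} ⋯ a_d^{ℓ_d} ), the inner sum being over all d-tuples of nonnegative integers (ℓ_1,…,ℓ_d) with Σ ℓ_i k_i = i − k − j. -/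

import Mathlib

open Finset


noncomputable def geo (k : ℕ) (a : ℂ) : PowerSeries ℂ :=
  PowerSeries.mk fun n => if k ∣ n then a ^ (n / k) else 0

lemma geo_mul (k : ℕ) (hk : 0 < k) (a : ℂ) :
    (1 - PowerSeries.C a * PowerSeries.X ^ k) * geo k a = 1 := by
  ext n
  rw [sub_mul, one_mul, map_sub]
  have : PowerSeries.C a * PowerSeries.X ^ k * geo k a = geo k a * PowerSeries.X ^ k * PowerSeries.C a := by ring
  rw [this, PowerSeries.coeff_mul_C, PowerSeries.coeff_mul_X_pow']
  simp only [geo, PowerSeries.coeff_mk, PowerSeries.coeff_one]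
  rcases Nat.eq_zero_or_pos n with rfl | hn
  · rw [if_pos (dvd_zero k), if_neg (by omega), if_pos rfl]
    simp
  · rw [if_neg hn.ne']
    by_cases hle : k ≤ n
    · rw [if_pos hle]
      by_cases hdvd : k ∣ n
      · have h2 : k ∣ n - k := Nat.dvd_sub hdvd dvd_rfl
        rw [if_pos hdvd, if_pos h2]
        have hnd : 1 ≤ n / k := (Nat.one_le_div_iff hk).mpr hle
        obtain ⟨m, rfl⟩ := hdvd
        have hm : 1 ≤ m := by by_contra h; push_neg at h; interval_cases m <;> omega
        have e1 : k * m - k = k * (m - 1) := by cases m with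
          | zero => omega
          | succ m' => simp [Nat.mul_succ]
        rw [e1, Nat.mul_div_cancel_left _ hk, Nat.mul_div_cancel_left _ hk,
          ← pow_succ, Nat.sub_add_cancel hm, sub_self]
      · have h2 : ¬ k ∣ n - k := fun h => hdvd (by
          simpa [Nat.sub_add_cancel hle] using Nat.dvd_add h (dvd_refl k))
        rw [if_neg hdvd, if_neg h2]; ring
    · rw [if_neg hle, if_neg (fun h => hle (Nat.le_of_dvd hn h))]; ring

lemma ofPS_coeff_neg (f : PowerSeries ℂ) (m : ℤ) (hm : m < 0) :
    (HahnSeries.ofPowerSeries ℤ ℂ f).coeff m = 0 := by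
  rw [HahnSeries.ofPowerSeries_apply]
  apply HahnSeries.embDomain_notin_range
  rintro ⟨n, hn⟩
  have : ((n : ℕ) : ℤ) = m := hn
  omega

lemma hahn_factor (k : ℕ) (a : ℂ) :
    HahnSeries.single (-(k:ℤ)) (1:ℂ) - HahnSeries.single (0:ℤ) a
      = HahnSeries.single (-(k:ℤ)) (1:ℂ) *
        HahnSeries.ofPowerSeries ℤ ℂ (1 - PowerSeries.C a * PowerSeries.X ^ k) := by
  have h1 : HahnSeries.ofPowerSeries ℤ ℂ (1 - PowerSeries.C a * PowerSeries.X ^ k)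
      = 1 - HahnSeries.single (0:ℤ) a * HahnSeries.single (k:ℤ) 1 := by
    rw [map_sub, map_one, map_mul, HahnSeries.ofPowerSeries_C, HahnSeries.ofPowerSeries_X_pow,
      HahnSeries.C_apply]
  rw [h1, mul_sub, mul_one, HahnSeries.single_mul_single, HahnSeries.single_mul_single]
  norm_num

lemma hahn_inv (k : ℕ) (hk : 0 < k) (a : ℂ) :
    (HahnSeries.single (-(k:ℤ)) (1:ℂ) - HahnSeries.single (0:ℤ) a)⁻¹ =
      HahnSeries.single (k:ℤ) 1 * HahnSeries.ofPowerSeries ℤ ℂ (geo k a) := by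
  refine inv_eq_of_mul_eq_one_right ?_
  rw [hahn_factor, mul_mul_mul_comm, HahnSeries.single_mul_single, ← map_mul, geo_mul k hk,
    map_one, mul_one, one_mul, neg_add_cancel, HahnSeries.single_zero_one]

lemma prod_single {ι : Type*} (s : Finset ι) (g : ι → ℕ) :
    ∏ i ∈ s, HahnSeries.single ((g i : ℤ)) (1:ℂ) =
      HahnSeries.single ((∑ i ∈ s, g i : ℕ) : ℤ) 1 := by
  classical
  induction s using Finset.cons_induction with
  | empty => simp [HahnSeries.single_zero_one]
  | cons i s h ih =>
      rw [prod_cons, ih, HahnSeries.single_mul_single, sum_cons, one_mul]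
      push_cast
      ring_nf

lemma geo_prod_coeff (N d : ℕ) (k : Fin d → ℕ) (hk : ∀ i, 0 < k i) (a : Fin d → ℂ)
    (n : ℕ) (hn : n ≤ N) :
    PowerSeries.coeff n (∏ t : Fin d, geo (k t) (a t)) =
      ∑ ℓ ∈ (Finset.univ : Finset (Fin d → Fin (N + 1))).filter
          (fun ℓ => ∑ t : Fin d, (ℓ t : ℕ) * k t = n),
        ∏ t : Fin d, a t ^ (ℓ t : ℕ) := by
  classical
  rw [PowerSeries.coeff_prod]
  simp only [geo, PowerSeries.coeff_mk]
  rw [← Finset.sum_filter_of_ne (p := fun l : Fin d →₀ ℕ => ∀ t, k t ∣ l t)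
    (fun l _ hl t => by
      by_contra hdvd
      exact hl (Finset.prod_eq_zero (Finset.mem_univ t) (if_neg hdvd)))]
  have hle : ∀ l ∈ (Finset.finsuppAntidiag Finset.univ n).filter
      (fun l : Fin d →₀ ℕ => ∀ t, k t ∣ l t), ∀ t, l t ≤ N := by
    intro l hl t
    rw [Finset.mem_filter, Finset.mem_finsuppAntidiag] at hl
    exact le_trans (hl.1.1 ▸ Finset.single_le_sum (f := fun i => l i)
      (fun i _ => Nat.zero_le _) (Finset.mem_univ t)) hn
  refine Finset.sum_nbij' (i := fun l => fun t => (⟨min (l t / k t) N,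
      Nat.lt_succ_of_le (min_le_right _ _)⟩ : Fin (N + 1)))
    (j := fun ℓ => Finsupp.equivFunOnFinite.symm (fun t => (ℓ t : ℕ) * k t))
    ?_ ?_ ?_ ?_ ?_
  · intro l hl
    have hb := hle l hl
    rw [Finset.mem_filter, Finset.mem_finsuppAntidiag] at hl
    rw [Finset.mem_filter]
    refine ⟨Finset.mem_univ _, ?_⟩
    calc ∑ t, min (l t / k t) N * k t = ∑ t, l t := by
            refine Finset.sum_congr rfl fun t _ => ?_
            rw [min_eq_left (le_trans (Nat.div_le_self _ _) (hb t)),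
              Nat.div_mul_cancel (hl.2 t)]
      _ = n := hl.1.1
  · intro ℓ hℓ
    rw [Finset.mem_filter] at hℓ
    rw [Finset.mem_filter, Finset.mem_finsuppAntidiag]
    refine ⟨⟨?_, fun x _ => Finset.mem_univ x⟩, fun t => ?_⟩
    · simpa using hℓ.2
    · simpa using dvd_mul_left (k t) ((ℓ t : ℕ))
  · intro l hl
    have hb := hle l hl
    rw [Finset.mem_filter] at hl
    ext t
    simp only [Finsupp.coe_equivFunOnFinite_symm]
    rw [min_eq_left (le_trans (Nat.div_le_self _ _) (hb t)),
      Nat.div_mul_cancel (hl.2 t)]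
  · intro ℓ hℓ
    funext t
    ext
    simp only [Finsupp.coe_equivFunOnFinite_symm]
    rw [Nat.mul_div_cancel _ (hk t), min_eq_left (Nat.lt_succ_iff.mp (ℓ t).isLt)]
  · intro l hl
    have hb := hle l hl
    rw [Finset.mem_filter] at hl
    refine Finset.prod_congr rfl fun t _ => ?_
    rw [if_pos (hl.2 t)]
    congr 1
    exact (min_eq_left (le_trans (Nat.div_le_self _ _) (hb t))).symm

/-- **Formula (2.7).** Let `f(z) = Σ_{i=0}^N c i z^i`, let `k 1, …, k d` be positive
integers with `k = Σ k i`, and `a 1, …, a d ∈ ℂ`. Expanding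
`f(z)/∏ (z^{k i} − a i)` as a formal Laurent series in `z⁻¹` (here realized in the
field of formal Laurent series in the variable `t = z⁻¹`, so that `z^j` is `t^{-j}`),
the polynomial part is `Σ_{j=0}^{N−k} d_j z^j` where
`d_j = Σ_{i=k+j}^N c i · Σ_{ℓ₁k₁+⋯+ℓ_d k_d = i−k−j} a₁^{ℓ₁}⋯a_d^{ℓ_d}`. -/
theorem stmt7 (N d : ℕ) (c : ℕ → ℂ) (k : Fin d → ℕ) (hk : ∀ i, 0 < k i)
    (a : Fin d → ℂ)
    (K : ℕ) (hK : K = ∑ i : Fin d, k i)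
    (F : LaurentSeries ℂ)
    (hF : F = (∑ i ∈ Finset.range (N + 1), HahnSeries.single (-(i : ℤ)) (c i)) *
      ∏ i : Fin d,
        (HahnSeries.single (-(k i : ℤ)) (1 : ℂ) - HahnSeries.single (0 : ℤ) (a i))⁻¹) :
    ∀ j : ℕ, F.coeff (-(j : ℤ)) =
      ∑ i ∈ Finset.Icc (K + j) N, c i *
        ∑ ℓ ∈ (Finset.univ : Finset (Fin d → Fin (N + 1))).filter
            (fun ℓ => ∑ t : Fin d, (ℓ t : ℕ) * k t = i - K - j),
          ∏ t : Fin d, a t ^ (ℓ t : ℕ) := by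
  intro j
  have hprod : (∏ i : Fin d,
      (HahnSeries.single (-(k i : ℤ)) (1 : ℂ) - HahnSeries.single (0 : ℤ) (a i))⁻¹)
      = HahnSeries.single (K : ℤ) 1 *
        HahnSeries.ofPowerSeries ℤ ℂ (∏ t : Fin d, geo (k t) (a t)) := by
    calc ∏ i : Fin d, (HahnSeries.single (-(k i : ℤ)) (1:ℂ) - HahnSeries.single (0:ℤ) (a i))⁻¹
        = ∏ i : Fin d, (HahnSeries.single ((k i : ℤ)) (1:ℂ) *
            HahnSeries.ofPowerSeries ℤ ℂ (geo (k i) (a i))) :=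
          Finset.prod_congr rfl fun i _ => hahn_inv (k i) (hk i) (a i)
      _ = (∏ i : Fin d, HahnSeries.single ((k i : ℤ)) (1:ℂ)) *
            ∏ i : Fin d, HahnSeries.ofPowerSeries ℤ ℂ (geo (k i) (a i)) :=
          Finset.prod_mul_distrib
      _ = _ := by
          rw [prod_single, ← map_prod, hK]
  set U := ∏ t : Fin d, geo (k t) (a t) with hU
  have hcoeff : ∀ i : ℕ, (HahnSeries.single (-(i:ℤ)) (c i) *
      (HahnSeries.single (K : ℤ) 1 * HahnSeries.ofPowerSeries ℤ ℂ U)).coeff (-(j:ℤ))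
      = c i * (HahnSeries.ofPowerSeries ℤ ℂ U).coeff ((i:ℤ) - K - j) := by
    intro i
    have e1 : (-(j:ℤ)) = ((i:ℤ) - K - j + K) + (-(i:ℤ)) := by ring
    rw [e1, HahnSeries.coeff_single_mul_add, HahnSeries.coeff_single_mul_add, one_mul]
  rw [hF, hprod, Finset.sum_mul]
  have hsum : (∑ i ∈ Finset.range (N + 1), HahnSeries.single (-(i : ℤ)) (c i) *
      (HahnSeries.single (K : ℤ) 1 * HahnSeries.ofPowerSeries ℤ ℂ U)).coeff (-(j:ℤ)) =
    ∑ i ∈ Finset.range (N + 1), (HahnSeries.single (-(i : ℤ)) (c i) *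
      (HahnSeries.single (K : ℤ) 1 * HahnSeries.ofPowerSeries ℤ ℂ U)).coeff (-(j:ℤ)) :=
    map_sum (HahnSeries.coeff.addMonoidHom (-(j:ℤ))) _ _
  rw [hsum]
  simp only [hcoeff]
  rw [← Finset.sum_subset (s₁ := Finset.Icc (K + j) N) (s₂ := Finset.range (N+1))
    (fun x hx => by rw [Finset.mem_Icc] at hx; rw [Finset.mem_range]; omega)
    (fun x hx hnx => by
      rw [Finset.mem_range] at hx
      rw [Finset.mem_Icc] at hnx
      have hneg : (x:ℤ) - K - j < 0 := by omega
      rw [ofPS_coeff_neg _ _ hneg, mul_zero])]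
  refine Finset.sum_congr rfl fun i hi => ?_
  rw [Finset.mem_Icc] at hi
  have e2 : (i:ℤ) - K - j = ((i - K - j : ℕ) : ℤ) := by omega
  rw [e2, HahnSeries.ofPowerSeries_apply_coeff, hU,
    geo_prod_coeff N d k hk a _ (by omega)]
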